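/- For every sufficiently small θ > 0 there exist C₁ > 0 and N ∈ ℕ such that for every n > N, every β ∈ [−∞, 0], and every environment configuration η : ℕ×ℤ^d → {0,1} (with ω = {(k,x) : η(k,x)=0}), one has Z_n(ω) − Z̃_n(ω) ≤ exp(−C₁·n^{1+2αθ}), where Z̃_n(ω) is the partition function restricted to paths γ with Σ_{i=1}^n |γ(i)−γ(i−1)|₁^α ≤ n^{1+2αθ}. -/

import Mathlib

open MeasureTheory ProbabilityTheory Filter Set

noncomputable section

namespace DPRE

/-- The environment: a Bernoulli field indexed by `ℕ × ℤᵈ` (`true` means `η = 1`). -/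
abbrev Env (d : ℕ) := ℕ × (Fin d → ℤ) → Bool

/-- `Q` is the law of an i.i.d. Bernoulli(p) field. -/
def IsBernoulliEnv {d : ℕ} (Q : Measure (Env d)) (p : ℝ) : Prop :=
  IsProbabilityMeasure Q ∧
  iIndepFun (fun i (η : Env d) => η i) Q ∧
  ∀ i : ℕ × (Fin d → ℤ), Q {η | η i = true} = ENNReal.ofReal p

/-- The ℓ¹-norm on `ℝᵈ`. -/
def l1 {d : ℕ} (x : Fin d → ℝ) : ℝ := ∑ j, |x j|

/-- The FPP-type energy `∑_{i=1}^n |γ(i) − γ(i−1)|₁^α` of a path `γ : ℕ → ℝᵈ`. -/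
def energyR {d : ℕ} (α : ℝ) (n : ℕ) (γ : ℕ → (Fin d → ℝ)) : ℝ :=
  ∑ i ∈ Finset.Icc 1 n, (l1 (γ i - γ (i - 1))) ^ α

open Classical in
/-- The number of indices `1 ≤ i ≤ n` with `(i, γ(i)) ∉ ω`. -/
def obstacleCount {d : ℕ} (n : ℕ) (ω : Set (ℕ × (Fin d → ℝ)))
    (γ : ℕ → (Fin d → ℝ)) : ℕ :=
  ∑ i ∈ Finset.Icc 1 n, (if (i, γ i) ∈ ω then 0 else 1)

/-- Paths of length `n` with values in `S ⊂ ℝᵈ`, starting at the origin (coordinates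
beyond `n` are normalized to `0`). -/
def PathR (d : ℕ) (S : Set (Fin d → ℝ)) (n : ℕ) :=
  {g : ℕ → (Fin d → ℝ) // g 0 = 0 ∧ (∀ i ∈ Finset.Icc 1 n, g i ∈ S) ∧
    ∀ i, n < i → g i = 0}

/-- The partition function
`Z_n(ω) = c₁^n ∑_γ exp(β·#{i : (i,γ(i)) ∉ ω} − c₂ ∑ |Δγ(i)|₁^α)`,
the sum being over paths with values in `S`. -/
def ZR {d : ℕ} (α c₁ c₂ β : ℝ) (n : ℕ) (S : Set (Fin d → ℝ))
    (ω : Set (ℕ × (Fin d → ℝ))) : ℝ :=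
  c₁ ^ n * ∑' g : PathR d S n,
    Real.exp (β * (obstacleCount n ω g.1 : ℝ) - c₂ * energyR α n g.1)

/-- The zero-temperature (`β = −∞`) partition function: only paths avoiding all
obstacles contribute. -/
def ZRneg {d : ℕ} (α c₁ c₂ : ℝ) (n : ℕ) (S : Set (Fin d → ℝ))
    (ω : Set (ℕ × (Fin d → ℝ))) : ℝ :=
  c₁ ^ n * ∑' g : PathR d S n,
    (if obstacleCount n ω g.1 = 0 then Real.exp (-(c₂ * energyR α n g.1)) else 0)

/-- The restricted partition function: the sum is further restricted to paths with
`∑ |Δγ(i)|₁^α ≤ K`. -/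
def ZRtilde {d : ℕ} (α c₁ c₂ β : ℝ) (n : ℕ) (S : Set (Fin d → ℝ))
    (ω : Set (ℕ × (Fin d → ℝ))) (K : ℝ) : ℝ :=
  c₁ ^ n * ∑' g : PathR d S n,
    (if energyR α n g.1 ≤ K then
      Real.exp (β * (obstacleCount n ω g.1 : ℝ) - c₂ * energyR α n g.1) else 0)

/-- The restricted zero-temperature partition function. -/
def ZRnegtilde {d : ℕ} (α c₁ c₂ : ℝ) (n : ℕ) (S : Set (Fin d → ℝ))
    (ω : Set (ℕ × (Fin d → ℝ))) (K : ℝ) : ℝ :=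
  c₁ ^ n * ∑' g : PathR d S n,
    (if obstacleCount n ω g.1 = 0 ∧ energyR α n g.1 ≤ K then
      Real.exp (-(c₂ * energyR α n g.1)) else 0)

/-- The lattice `ℤᵈ` viewed inside `ℝᵈ`. -/
def intPts (d : ℕ) : Set (Fin d → ℝ) :=
  {x | ∃ z : Fin d → ℤ, x = fun j => (z j : ℝ)}

/-- The set `ℤᵈ ∪ n^θ ℤᵈ` inside `ℝᵈ`. -/
def gridPts (d : ℕ) (θ : ℝ) (n : ℕ) : Set (Fin d → ℝ) :=
  intPts d ∪ {x | ∃ z : Fin d → ℤ, x = fun j => (n : ℝ) ^ θ * (z j : ℝ)}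

/-- The obstacle-free configuration `ω = {(k,x) : η(k,x) = 0}` viewed in `ℕ × ℝᵈ`. -/
def omegaOf {d : ℕ} (η : Env d) : Set (ℕ × (Fin d → ℝ)) :=
  {q | ∃ (k : ℕ) (x : Fin d → ℤ), η (k, x) = false ∧ q = (k, fun j => (x j : ℝ))}

/-- A subset of `ℕ × ℤᵈ` viewed in `ℕ × ℝᵈ`. -/
def embedZ {d : ℕ} (ω : Set (ℕ × (Fin d → ℤ))) : Set (ℕ × (Fin d → ℝ)) :=
  {q | ∃ (k : ℕ) (x : Fin d → ℤ), (k, x) ∈ ω ∧ q = (k, fun j => (x j : ℝ))}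

/-- The augmented configuration `ω̄`: to `ω` we add the grid point `(k, x)` for every
`(k,x) ∈ ℕ × n^θ ℤᵈ` whose box `{k} × (x + [0, n^θ)^d)` contains no point of `ω`. -/
def augment {d : ℕ} (θ : ℝ) (n : ℕ) (ω : Set (ℕ × (Fin d → ℝ))) :
    Set (ℕ × (Fin d → ℝ)) :=
  ω ∪ {q | ∃ (k : ℕ) (z : Fin d → ℤ),
        q = (k, fun j => (n : ℝ) ^ θ * (z j : ℝ)) ∧
        ∀ y : Fin d → ℝ,
          (∀ j, (n : ℝ) ^ θ * (z j : ℝ) ≤ y j ∧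
                y j < (n : ℝ) ^ θ * (z j : ℝ) + (n : ℝ) ^ θ) → (k, y) ∉ ω}

/-! ### Auxiliary lemmas -/

lemma l1_nonneg {d : ℕ} (x : Fin d → ℝ) : 0 ≤ l1 x :=
  Finset.sum_nonneg fun j _ => abs_nonneg _

lemma aux_summable_nat {c α : ℝ} (hc : 0 < c) (hα : 0 < α) :
    Summable (fun n : ℕ => Real.exp (-(c * (n : ℝ) ^ α))) := by
  refine summable_of_isBigO_nat
    (Real.summable_nat_rpow.mpr (show (-2 : ℝ) < -1 by norm_num)) ?_
  rw [Asymptotics.isBigO_iff]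
  refine ⟨1, ?_⟩
  have h := Asymptotics.isLittleO_iff.mp (isLittleO_log_rpow_atTop hα)
    (show (0 : ℝ) < c / 2 by linarith)
  have h2 : ∀ᶠ x : ℝ in atTop, 2 * Real.log x ≤ c * x ^ α := by
    filter_upwards [h, eventually_ge_atTop (0 : ℝ)] with x hx hx0
    have hb : |Real.log x| ≤ c / 2 * |x ^ α| := by
      simpa [Real.norm_eq_abs] using hx
    have hxa : (0 : ℝ) ≤ x ^ α := Real.rpow_nonneg hx0 _
    have : Real.log x ≤ c / 2 * x ^ α := by
      calc Real.log x ≤ |Real.log x| := le_abs_self _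
        _ ≤ c / 2 * |x ^ α| := hb
        _ = c / 2 * x ^ α := by rw [abs_of_nonneg hxa]
    linarith
  filter_upwards [tendsto_natCast_atTop_atTop.eventually h2,
    eventually_ge_atTop 1] with n hn hn1
  have hn0 : (0 : ℝ) < (n : ℝ) := by exact_mod_cast Nat.lt_of_lt_of_le Nat.zero_lt_one hn1
  have key : Real.exp (-(c * (n : ℝ) ^ α)) ≤ (n : ℝ) ^ (-2 : ℝ) := by
    rw [show ((n : ℝ) ^ (-2 : ℝ)) = Real.exp (Real.log n * (-2)) from
      Real.rpow_def_of_pos hn0 _]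
    apply Real.exp_le_exp.mpr
    nlinarith [hn]
  have h1 : ‖Real.exp (-(c * (n : ℝ) ^ α))‖ = Real.exp (-(c * (n : ℝ) ^ α)) :=
    Real.norm_of_nonneg (Real.exp_nonneg _)
  have h2' : ‖(n : ℝ) ^ (-2 : ℝ)‖ = (n : ℝ) ^ (-2 : ℝ) :=
    Real.norm_of_nonneg (Real.rpow_nonneg hn0.le _)
  rw [h1, h2', one_mul]
  exact key

lemma aux_summable_int {c α : ℝ} (hc : 0 < c) (hα : 0 < α) :
    Summable (fun m : ℤ => Real.exp (-(c * |(m : ℝ)| ^ α))) := by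
  have h := aux_summable_nat hc hα
  apply Summable.of_nat_of_neg
  · refine h.congr fun n => ?_
    simp
  · refine h.congr fun n => ?_
    simp

lemma aux_pi {A : Type*} {φ : A → ℝ} (hnn : ∀ a, 0 ≤ φ a) (hs : Summable φ) (n : ℕ) :
    Summable (fun v : Fin n → A => ∏ i, φ (v i)) ∧
      (∑' v : Fin n → A, ∏ i, φ (v i)) = (∑' a, φ a) ^ n := by
  induction n with
  | zero =>
    constructor
    · refine summable_of_ne_finset_zero (s := {(default : Fin 0 → A)}) ?_
      intro v hv
      exact absurd (Finset.mem_singleton.mpr (Subsingleton.elim v default)) hv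
    · rw [tsum_eq_single (default : Fin 0 → A)
        (fun b hb => absurd (Subsingleton.elim b default) hb)]
      simp
  | succ n ih =>
    obtain ⟨ihs, iht⟩ := ih
    set e : (A × (Fin n → A)) ≃ (Fin (n + 1) → A) :=
      Fin.consEquiv (fun _ : Fin (n + 1) => A) with he
    have hF : Summable (fun p : A × (Fin n → A) => φ p.1 * ∏ i : Fin n, φ (p.2 i)) :=
      Summable.mul_of_nonneg (f := φ) (g := fun v : Fin n → A => ∏ i : Fin n, φ (v i))
        hs ihs (fun a => hnn a) (fun v => Finset.prod_nonneg fun i _ => hnn _)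
    have hcomp : ∀ p : A × (Fin n → A),
        (∏ i, φ ((e p) i)) = φ p.1 * ∏ i, φ (p.2 i) := by
      intro p
      rw [Fin.prod_univ_succ]
      simp [he, Fin.consEquiv]
    constructor
    · exact e.summable_iff.mp (hF.congr fun p => (hcomp p).symm)
    · rw [← e.tsum_eq (fun v : Fin (n + 1) → A => ∏ i, φ (v i))]
      calc (∑' p : A × (Fin n → A), ∏ i, φ ((e p) i))
          = ∑' p : A × (Fin n → A), φ p.1 * ∏ i, φ (p.2 i) := tsum_congr hcomp
        _ = (∑' a, φ a) * ∑' v : Fin n → A, ∏ i, φ (v i) :=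
            (Summable.tsum_mul_tsum hs ihs hF).symm
        _ = (∑' a, φ a) ^ (n + 1) := by rw [iht, pow_succ]; ring

lemma aux_summable_zd {d : ℕ} (hd : 0 < d) {c α : ℝ} (hc : 0 < c) (hα : 0 < α) :
    Summable (fun y : Fin d → ℤ =>
      Real.exp (-(c * (l1 (fun j => (y j : ℝ))) ^ α))) := by
  have hZ : Summable (fun m : ℤ => Real.exp (-(c / d * |(m : ℝ)| ^ α))) :=
    aux_summable_int (by positivity) hα
  have hprod := (aux_pi (A := ℤ) (φ := fun m => Real.exp (-(c / d * |(m : ℝ)| ^ α)))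
    (fun m => Real.exp_nonneg _) hZ d).1
  refine Summable.of_nonneg_of_le (fun y => Real.exp_nonneg _) (fun y => ?_) hprod
  rw [← Real.exp_sum]
  apply Real.exp_le_exp.mpr
  have hd' : (0 : ℝ) < d := by exact_mod_cast hd
  set L : ℝ := (l1 (fun j => ((y j : ℤ) : ℝ))) ^ α with hL
  have hL0 : 0 ≤ L := Real.rpow_nonneg (l1_nonneg _) _
  have key : ∑ j : Fin d, |((y j : ℤ) : ℝ)| ^ α ≤ (d : ℝ) * L := by
    have hle : ∀ j : Fin d, |((y j : ℤ) : ℝ)| ^ α ≤ L := by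
      intro j
      refine Real.rpow_le_rpow (abs_nonneg _) ?_ hα.le
      exact Finset.single_le_sum (f := fun j => |((y j : ℤ) : ℝ)|)
        (fun j _ => abs_nonneg _) (Finset.mem_univ j)
    calc ∑ j : Fin d, |((y j : ℤ) : ℝ)| ^ α ≤ ∑ _j : Fin d, L :=
          Finset.sum_le_sum fun j _ => hle j
      _ = (d : ℝ) * L := by
          rw [Finset.sum_const, Finset.card_univ, Fintype.card_fin, nsmul_eq_mul]
  have hsum : ∑ j : Fin d, -(c / d * |((y j : ℤ) : ℝ)| ^ α)
      = -(c / d * ∑ j : Fin d, |((y j : ℤ) : ℝ)| ^ α) := by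
    rw [Finset.mul_sum, Finset.sum_neg_distrib]
  rw [hsum]
  have h1 : c / d * (∑ j : Fin d, |((y j : ℤ) : ℝ)| ^ α) ≤ c / d * ((d : ℝ) * L) :=
    mul_le_mul_of_nonneg_left key (by positivity)
  have h2 : c / d * ((d : ℝ) * L) = c * L := by field_simp
  have : c / d * (∑ j : Fin d, |((y j : ℤ) : ℝ)| ^ α) ≤ c * L := by linarith
  linarith

/-- Integer part of a vector. -/
def zOf {d : ℕ} (x : Fin d → ℝ) : Fin d → ℤ := fun j => ⌊x j⌋

lemma zOf_cast {d : ℕ} (z : Fin d → ℤ) : zOf (fun j => (z j : ℝ)) = z := by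
  funext j; simp [zOf]

lemma cast_zOf {d : ℕ} {x : Fin d → ℝ} (hx : x ∈ intPts d) :
    (fun j => ((zOf x j : ℤ) : ℝ)) = x := by
  obtain ⟨z, rfl⟩ := hx
  funext j; simp [zOf]

lemma zero_mem_intPts {d : ℕ} : (0 : Fin d → ℝ) ∈ intPts d :=
  ⟨0, by funext j; simp⟩

/-- Increment sequence extended by zero. -/
def stepFun {d : ℕ} (n : ℕ) (Δ : Fin n → (Fin d → ℤ)) : ℕ → (Fin d → ℤ) :=
  fun k => if h : k < n then Δ ⟨k, h⟩ else 0

/-- The path with increments `Δ`. -/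
def pathOf {d : ℕ} (n : ℕ) (Δ : Fin n → (Fin d → ℤ)) : ℕ → (Fin d → ℝ) :=
  fun i => if i ≤ n then (fun j => ((∑ k ∈ Finset.range i, stepFun n Δ k) j : ℝ)) else 0

lemma pathOf_apply_le {d : ℕ} {n : ℕ} (Δ : Fin n → (Fin d → ℤ)) {i : ℕ} (hi : i ≤ n) :
    pathOf n Δ i = fun j => ((∑ k ∈ Finset.range i, stepFun n Δ k) j : ℝ) := by
  simp [pathOf, hi]

/-- The bijection between paths and increment sequences. -/
def pathEquiv (d n : ℕ) : PathR d (intPts d) n ≃ (Fin n → (Fin d → ℤ)) where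
  toFun g := fun i => zOf (g.1 ((i : ℕ) + 1)) - zOf (g.1 (i : ℕ))
  invFun Δ :=
    ⟨pathOf n Δ,
      by funext j; simp [pathOf],
      fun i hi => ⟨∑ k ∈ Finset.range i, stepFun n Δ k,
        pathOf_apply_le Δ (Finset.mem_Icc.mp hi).2⟩,
      fun i hi => by simp [pathOf, Nat.not_le.mpr hi]⟩
  left_inv := by
    intro g
    obtain ⟨g, hg0, hgmem, hgtop⟩ := g
    apply Subtype.ext
    funext i
    show pathOf n (fun i : Fin n => zOf (g ((i : ℕ) + 1)) - zOf (g (i : ℕ))) i = g i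
    by_cases hi : i ≤ n
    · rw [pathOf_apply_le _ hi]
      have hsum : (∑ k ∈ Finset.range i,
          stepFun n (fun i : Fin n => zOf (g ((i : ℕ) + 1)) - zOf (g (i : ℕ))) k)
          = zOf (g i) := by
        have : ∀ k ∈ Finset.range i,
            stepFun n (fun i : Fin n => zOf (g ((i : ℕ) + 1)) - zOf (g (i : ℕ))) k
              = zOf (g (k + 1)) - zOf (g k) := by
          intro k hk
          have hkn : k < n := lt_of_lt_of_le (Finset.mem_range.mp hk) hi
          simp [stepFun, hkn]
        rw [Finset.sum_congr rfl this, Finset.sum_range_sub (fun k => zOf (g k))]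
        rw [hg0]
        have : zOf (0 : Fin d → ℝ) = 0 := by funext j; simp [zOf]
        rw [this, sub_zero]
      rw [hsum]
      rcases Nat.eq_zero_or_pos i with h0 | h1
      · subst h0
        rw [hg0]
        exact cast_zOf zero_mem_intPts
      · exact cast_zOf (hgmem i (Finset.mem_Icc.mpr ⟨h1, hi⟩))
    · rw [hgtop i (Nat.not_le.mp hi)]
      simp [pathOf, hi]
  right_inv := by
    intro Δ
    funext i
    show zOf (pathOf n Δ ((i : ℕ) + 1)) - zOf (pathOf n Δ (i : ℕ)) = Δ i
    have hi1 : (i : ℕ) + 1 ≤ n := i.isLt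
    have hi0 : (i : ℕ) ≤ n := le_of_lt i.isLt
    rw [pathOf_apply_le _ hi1, pathOf_apply_le _ hi0]
    rw [zOf_cast, zOf_cast, Finset.sum_range_succ]
    have : stepFun n Δ (i : ℕ) = Δ i := by simp [stepFun, i.isLt]
    rw [this]
    abel

lemma energy_pathOf {d : ℕ} (α : ℝ) (n : ℕ) (Δ : Fin n → (Fin d → ℤ)) :
    energyR α n (pathOf n Δ)
      = ∑ i : Fin n, (l1 fun j => ((Δ i j : ℤ) : ℝ)) ^ α := by
  unfold energyR
  have hstep : ∀ i ∈ Finset.Icc 1 n,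
      (l1 (pathOf n Δ i - pathOf n Δ (i - 1))) ^ α
        = (l1 fun j => (((stepFun n Δ (i - 1)) j : ℤ) : ℝ)) ^ α := by
    intro i hi
    obtain ⟨h1, h2⟩ := Finset.mem_Icc.mp hi
    have hi1 : i - 1 ≤ n := le_trans (Nat.sub_le i 1) h2
    have hsucc : i - 1 + 1 = i := Nat.succ_pred_eq_of_pos h1
    congr 1
    have hdiff : pathOf n Δ i - pathOf n Δ (i - 1)
        = fun j => (((stepFun n Δ (i - 1)) j : ℤ) : ℝ) := by
      funext j
      rw [Pi.sub_apply, pathOf_apply_le _ h2, pathOf_apply_le _ hi1]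
      have : (∑ k ∈ Finset.range i, stepFun n Δ k)
          = (∑ k ∈ Finset.range (i - 1), stepFun n Δ k) + stepFun n Δ (i - 1) := by
        rw [← hsucc, Finset.sum_range_succ]
        simp
      rw [this]
      push_cast [Pi.add_apply]
      ring
    rw [hdiff]
  rw [Finset.sum_congr rfl hstep, ← Finset.Ico_add_one_right_eq_Icc, Finset.sum_Ico_eq_sum_range]
  simp only [Nat.succ_sub_one, Nat.add_sub_cancel, Nat.add_sub_cancel_left]
  rw [← Fin.sum_univ_eq_sum_range
    (fun k => (l1 fun j => (((stepFun n Δ k) j : ℤ) : ℝ)) ^ α) n]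
  refine Finset.sum_congr rfl fun i _ => ?_
  have : stepFun n Δ (i : ℕ) = Δ i := by simp [stepFun, i.isLt]
  rw [this]

lemma path_sum {d : ℕ} (hd : 0 < d) {α : ℝ} (hα : 0 < α) {c : ℝ} (hc : 0 < c) (n : ℕ) :
    Summable (fun g : PathR d (intPts d) n => Real.exp (-(c * energyR α n g.1))) ∧
    (∑' g : PathR d (intPts d) n, Real.exp (-(c * energyR α n g.1)))
      = (∑' y : Fin d → ℤ, Real.exp (-(c * (l1 (fun j => (y j : ℝ))) ^ α))) ^ n := by
  set φ := fun y : Fin d → ℤ => Real.exp (-(c * (l1 (fun j => (y j : ℝ))) ^ α)) with hφ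
  have hφs : Summable φ := aux_summable_zd hd hc hα
  have hpi := aux_pi (fun y => Real.exp_nonneg _) hφs n
  have hcomp : ∀ Δ : Fin n → (Fin d → ℤ),
      Real.exp (-(c * energyR α n (pathOf n Δ))) = ∏ i, φ (Δ i) := by
    intro Δ
    rw [energy_pathOf, Finset.mul_sum, ← Finset.sum_neg_distrib, Real.exp_sum]
  have h1 : Summable (fun Δ : Fin n → (Fin d → ℤ) =>
      Real.exp (-(c * energyR α n (pathOf n Δ)))) :=
    hpi.1.congr fun Δ => (hcomp Δ).symm
  have hval : ∀ Δ : Fin n → (Fin d → ℤ),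
      ((pathEquiv d n).symm Δ).1 = pathOf n Δ := fun _ => rfl
  constructor
  · refine ((pathEquiv d n).symm.summable_iff
      (f := fun g : PathR d (intPts d) n => Real.exp (-(c * energyR α n g.1)))).mp ?_
    refine h1.congr fun Δ => ?_
    simp only [Function.comp, hval]
  · rw [← (pathEquiv d n).symm.tsum_eq
      (fun g : PathR d (intPts d) n => Real.exp (-(c * energyR α n g.1)))]
    calc (∑' Δ : Fin n → (Fin d → ℤ),
          Real.exp (-(c * energyR α n ((pathEquiv d n).symm Δ).1)))
        = ∑' Δ : Fin n → (Fin d → ℤ), ∏ i, φ (Δ i) := by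
          refine tsum_congr fun Δ => ?_
          rw [hval]
          exact hcomp Δ
      _ = (∑' y, φ y) ^ n := hpi.2

/-- The key tail bound for a dominated weight. -/
lemma tail_bound {d : ℕ} (hd : 0 < d) {α c₂ : ℝ} (hα : 0 < α) (hc₂ : 0 < c₂)
    (n : ℕ) (K : ℝ) (hK : 0 ≤ K) (w : PathR d (intPts d) n → ℝ)
    (hw0 : ∀ g, 0 ≤ w g)
    (hwle : ∀ g, w g ≤ Real.exp (-(c₂ * energyR α n g.1))) :
    (∑' g : PathR d (intPts d) n, w g)
      - (∑' g : PathR d (intPts d) n, if energyR α n g.1 ≤ K then w g else 0)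
      ≤ Real.exp (-(c₂ / 2 * K)) *
        (∑' y : Fin d → ℤ,
          Real.exp (-(c₂ / 2 * (l1 (fun j => (y j : ℝ))) ^ α))) ^ n := by
  have hW := path_sum hd hα hc₂ n
  have hU := path_sum hd hα (show (0 : ℝ) < c₂ / 2 by linarith) n
  have hw : Summable w := Summable.of_nonneg_of_le hw0 hwle hW.1
  set wt : PathR d (intPts d) n → ℝ :=
    fun g => if energyR α n g.1 ≤ K then w g else 0 with hwt
  have hwt0 : ∀ g, 0 ≤ wt g := by
    intro g
    by_cases h : energyR α n g.1 ≤ K <;> simp [hwt, h, hw0 g]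
  have hwtle : ∀ g, wt g ≤ w g := by
    intro g
    by_cases h : energyR α n g.1 ≤ K <;> simp [hwt, h, hw0 g]
  have hwts : Summable wt := Summable.of_nonneg_of_le hwt0 hwtle hw
  rw [← Summable.tsum_sub hw hwts]
  set u : PathR d (intPts d) n → ℝ :=
    fun g => Real.exp (-(c₂ / 2 * K)) * Real.exp (-(c₂ / 2 * energyR α n g.1)) with hu
  have hus : Summable u := hU.1.mul_left _
  have hptw : ∀ g, w g - wt g ≤ u g := by
    intro g
    by_cases h : energyR α n g.1 ≤ K
    · simp only [hwt, if_pos h, sub_self, hu]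
      positivity
    · simp only [hwt, if_neg h, sub_zero, hu]
      have hKe : K ≤ energyR α n g.1 := le_of_not_ge h
      calc w g ≤ Real.exp (-(c₂ * energyR α n g.1)) := hwle g
        _ ≤ Real.exp (-(c₂ / 2 * K)) * Real.exp (-(c₂ / 2 * energyR α n g.1)) := by
            rw [← Real.exp_add]
            apply Real.exp_le_exp.mpr
            nlinarith
  calc (∑' g, (w g - wt g)) ≤ ∑' g, u g := Summable.tsum_le_tsum hptw (hw.sub hwts) hus
    _ = Real.exp (-(c₂ / 2 * K)) *
        ∑' g : PathR d (intPts d) n, Real.exp (-(c₂ / 2 * energyR α n g.1)) :=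
          tsum_mul_left
    _ = _ := by rw [hU.2]

/-- For every sufficiently small `θ > 0` there are `C₁ > 0` and `N`
such that for all `n > N`, all `β ∈ [−∞, 0]` and every environment `η`, the paths of
energy larger than `n^{1+2αθ}` contribute at most `exp(−C₁ n^{1+2αθ})` to the partition
function: `Z_n(ω) − Z̃_n(ω) ≤ exp(−C₁ n^{1+2αθ})`. -/
theorem restricted_partition_function_close (d : ℕ) (hd : 1 ≤ d) (α : ℝ) (hα : 0 < α)
    (c₁ c₂ : ℝ) (hc₁ : 0 < c₁) (hc₂ : 0 < c₂)
    (hnorm : ∑' y : Fin d → ℤ,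
      c₁ * Real.exp (-(c₂ * (l1 (fun j => (y j : ℝ))) ^ α)) = 1) :
    ∃ θ₀ : ℝ, 0 < θ₀ ∧ ∀ θ ∈ Set.Ioo (0 : ℝ) θ₀,
      ∃ C₁ : ℝ, 0 < C₁ ∧ ∃ N : ℕ, ∀ n : ℕ, N < n → ∀ η : Env d,
        (∀ β : ℝ, β ≤ 0 →
          ZR α c₁ c₂ β n (intPts d) (omegaOf η)
              - ZRtilde α c₁ c₂ β n (intPts d) (omegaOf η) ((n : ℝ) ^ ((1 : ℝ) + 2 * α * θ))
            ≤ Real.exp (-C₁ * (n : ℝ) ^ ((1 : ℝ) + 2 * α * θ))) ∧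
        ZRneg α c₁ c₂ n (intPts d) (omegaOf η)
            - ZRnegtilde α c₁ c₂ n (intPts d) (omegaOf η) ((n : ℝ) ^ ((1 : ℝ) + 2 * α * θ))
          ≤ Real.exp (-C₁ * (n : ℝ) ^ ((1 : ℝ) + 2 * α * θ)) := by
  have hd0 : 0 < d := hd
  refine ⟨1, one_pos, ?_⟩
  rintro θ ⟨hθ0, hθ1⟩
  have hφ2s : Summable (fun y : Fin d → ℤ =>
      Real.exp (-(c₂ / 2 * (l1 (fun j => (y j : ℝ))) ^ α))) :=
    aux_summable_zd hd0 (by linarith) hα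
  set S : ℝ := ∑' y : Fin d → ℤ,
      Real.exp (-(c₂ / 2 * (l1 (fun j => (y j : ℝ))) ^ α)) with hSdef
  have hS1 : 1 ≤ S := by
    have h0 : Real.exp (-(c₂ / 2 * (l1 (fun j => (((0 : Fin d → ℤ) j : ℤ) : ℝ))) ^ α))
        = 1 := by
      have hl : l1 (fun j : Fin d => (((0 : Fin d → ℤ) j : ℤ) : ℝ)) = 0 := by
        simp [l1]
      rw [hl, Real.zero_rpow (ne_of_gt hα)]
      simp
    calc (1 : ℝ) = _ := h0.symm
      _ ≤ S := Summable.le_tsum hφ2s 0 (fun _ _ => Real.exp_nonneg _)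
  have hM : (0 : ℝ) < c₁ * S := by nlinarith
  have htend : Tendsto (fun n : ℕ => (n : ℝ) ^ (2 * α * θ)) atTop atTop :=
    (tendsto_rpow_atTop (by positivity)).comp tendsto_natCast_atTop_atTop
  obtain ⟨N, hN⟩ := eventually_atTop.mp
    (htend.eventually_ge_atTop (4 * Real.log (c₁ * S) / c₂))
  refine ⟨c₂ / 4, by positivity, N, ?_⟩
  intro n hn η
  have hn0 : 0 < n := Nat.lt_of_le_of_lt (Nat.zero_le N) hn
  have hnR : (0 : ℝ) < (n : ℝ) := by exact_mod_cast hn0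
  set K : ℝ := (n : ℝ) ^ ((1 : ℝ) + 2 * α * θ) with hKdef
  have hK0 : 0 ≤ K := Real.rpow_nonneg hnR.le _
  have hKeq : K = (n : ℝ) * (n : ℝ) ^ (2 * α * θ) := by
    rw [hKdef, Real.rpow_add hnR, Real.rpow_one]
  have hlog : Real.log (c₁ * S) ≤ c₂ / 4 * (n : ℝ) ^ (2 * α * θ) := by
    have h := hN n (le_of_lt hn)
    rw [div_le_iff₀ hc₂] at h
    nlinarith
  have hmain : (c₁ * S) ^ n * Real.exp (-(c₂ / 2 * K))
      ≤ Real.exp (-(c₂ / 4) * K) := by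
    have hMn : (c₁ * S) ^ n = Real.exp ((n : ℝ) * Real.log (c₁ * S)) := by
      rw [Real.exp_nat_mul, Real.exp_log hM]
    rw [hMn, ← Real.exp_add]
    apply Real.exp_le_exp.mpr
    have hmul : (n : ℝ) * Real.log (c₁ * S)
        ≤ (n : ℝ) * (c₂ / 4 * (n : ℝ) ^ (2 * α * θ)) :=
      mul_le_mul_of_nonneg_left hlog hnR.le
    rw [hKeq]
    nlinarith
  have hrpow0 : (0 : ℝ) ≤ (n : ℝ) ^ (2 * α * θ) := Real.rpow_nonneg hnR.le _
  -- the generic bound: for any weight dominated by the energy weight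
  have main : ∀ w : PathR d (intPts d) n → ℝ, (∀ g, 0 ≤ w g) →
      (∀ g, w g ≤ Real.exp (-(c₂ * energyR α n g.1))) →
      c₁ ^ n * (∑' g : PathR d (intPts d) n, w g)
        - c₁ ^ n * (∑' g : PathR d (intPts d) n,
            if energyR α n g.1 ≤ K then w g else 0)
        ≤ Real.exp (-(c₂ / 4) * K) := by
    intro w hw0 hwle
    have htb := tail_bound hd0 hα hc₂ n K hK0 w hw0 hwle
    have hc₁n : (0 : ℝ) ≤ c₁ ^ n := pow_nonneg hc₁.le n
    calc c₁ ^ n * (∑' g : PathR d (intPts d) n, w g)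
          - c₁ ^ n * (∑' g : PathR d (intPts d) n,
              if energyR α n g.1 ≤ K then w g else 0)
        = c₁ ^ n * ((∑' g : PathR d (intPts d) n, w g)
            - ∑' g : PathR d (intPts d) n,
              if energyR α n g.1 ≤ K then w g else 0) := by ring
      _ ≤ c₁ ^ n * (Real.exp (-(c₂ / 2 * K)) * S ^ n) :=
            mul_le_mul_of_nonneg_left htb hc₁n
      _ = (c₁ * S) ^ n * Real.exp (-(c₂ / 2 * K)) := by rw [mul_pow]; ring
      _ ≤ Real.exp (-(c₂ / 4) * K) := hmain
  constructor
  · intro β hβ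
    set w : PathR d (intPts d) n → ℝ := fun g =>
      Real.exp (β * (obstacleCount n (omegaOf η) g.1 : ℝ) - c₂ * energyR α n g.1)
      with hwdef
    have hw0 : ∀ g, 0 ≤ w g := fun g => Real.exp_nonneg _
    have hwle : ∀ g, w g ≤ Real.exp (-(c₂ * energyR α n g.1)) := by
      intro g
      apply Real.exp_le_exp.mpr
      have hcount : (0 : ℝ) ≤ (obstacleCount n (omegaOf η) g.1 : ℝ) := Nat.cast_nonneg _
      nlinarith
    have := main w hw0 hwle
    simpa [ZR, ZRtilde, hwdef] using this
  · set w : PathR d (intPts d) n → ℝ := fun g =>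
      if obstacleCount n (omegaOf η) g.1 = 0
        then Real.exp (-(c₂ * energyR α n g.1)) else 0 with hwdef
    have hw0 : ∀ g, 0 ≤ w g := by
      intro g
      by_cases h : obstacleCount n (omegaOf η) g.1 = 0 <;>
        simp [hwdef, h, Real.exp_nonneg]
    have hwle : ∀ g, w g ≤ Real.exp (-(c₂ * energyR α n g.1)) := by
      intro g
      by_cases h : obstacleCount n (omegaOf η) g.1 = 0 <;>
        simp [hwdef, h, Real.exp_nonneg]
    have key := main w hw0 hwle
    have hrw : (∑' g : PathR d (intPts d) n,
        (if obstacleCount n (omegaOf η) g.1 = 0 ∧ energyR α n g.1 ≤ K then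
          Real.exp (-(c₂ * energyR α n g.1)) else 0))
        = ∑' g : PathR d (intPts d) n,
          (if energyR α n g.1 ≤ K then w g else 0) := by
      refine tsum_congr fun g => ?_
      by_cases h1 : obstacleCount n (omegaOf η) g.1 = 0 <;>
        by_cases h2 : energyR α n g.1 ≤ K <;>
          simp [hwdef, h1, h2]
    calc ZRneg α c₁ c₂ n (intPts d) (omegaOf η)
        - ZRnegtilde α c₁ c₂ n (intPts d) (omegaOf η) K
        = c₁ ^ n * (∑' g : PathR d (intPts d) n, w g)
          - c₁ ^ n * (∑' g : PathR d (intPts d) n,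
              if energyR α n g.1 ≤ K then w g else 0) := by
          rw [ZRneg, ZRnegtilde, hrw]
      _ ≤ Real.exp (-(c₂ / 4) * K) := key

end DPRE
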